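/- For all real x ≠ y, the Hermite limit kernel at α = 0 and θ = 1 is the sine kernel: 𝒦^{Her(0,1)}(x,y) = sin(2(x−y)) / (π(x−y)). -/

import Mathlib

open Real Finset

/-- Signed power: `x^θ := sign(x)·|x|^θ`. -/
noncomputable def sgnPow (x θ : ℝ) : ℝ := Real.sign x * |x| ^ θ

/-- The limit kernel `𝒦^{(α,θ)}(x,y)` of the biorthogonal Jacobi/Laguerre ensembles. -/
noncomputable def limitKernel (α θ x y : ℝ) : ℝ :=
  ∑' k : ℕ, ∑' l : ℕ,
    ((-1) ^ k * x ^ k / ((Nat.factorial k : ℝ) * Real.Gamma ((α + 1 + k) / θ))) *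
      ((-1) ^ l * y ^ (θ * (l : ℝ)) /
        ((Nat.factorial l : ℝ) * Real.Gamma (α + 1 + θ * l))) *
      (θ / (α + 1 + k + θ * l))

/-- The Hermite limit kernel `𝒦^{Her(α,θ)}(x,y) = 𝒦^{((α-1)/2,θ)}(x²,y²) +
x^θ y · 𝒦^{((α+θ)/2,θ)}(x²,y²)`. -/
noncomputable def hermiteLimitKernel (α θ x y : ℝ) : ℝ :=
  limitKernel ((α - 1) / 2) θ (x ^ 2) (y ^ 2) +
    sgnPow x θ * y * limitKernel ((α + θ) / 2) θ (x ^ 2) (y ^ 2)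

/-! ### Auxiliary lemmas -/

lemma GammaNatAddHalf (n : ℕ) :
    Real.Gamma ((n : ℝ) + 1/2) = (Nat.factorial (2*n) : ℝ) * Real.sqrt π / (4^n * Nat.factorial n) := by
  induction n with
  | zero =>
    rw [show ((0:ℕ):ℝ) + 1/2 = 1/2 by norm_num, Real.Gamma_one_half_eq]
    simp
  | succ n ih =>
    have h : ((n : ℝ) + 1 + 1/2) = ((n : ℝ) + 1/2) + 1 := by ring
    have hne : ((n : ℝ) + 1/2) ≠ 0 := by positivity
    have hfact : (Nat.factorial (2*(n+1)) : ℝ) = (2*n+2) * (2*n+1) * Nat.factorial (2*n) := by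
      have : 2*(n+1) = (2*n+1) + 1 := by ring
      rw [this, Nat.factorial_succ, Nat.factorial_succ]
      push_cast; ring
    have hfs : (Nat.factorial (n+1) : ℝ) = (n+1) * Nat.factorial n := by
      rw [Nat.factorial_succ]; push_cast; ring
    push_cast at hfact hfs ⊢
    rw [h, Real.Gamma_add_one hne, ih, hfact, hfs]
    have h1 : (Nat.factorial n : ℝ) ≠ 0 := by exact_mod_cast Nat.factorial_ne_zero n
    field_simp
    ring

/-- The weight `w(m) = (-1)^{m/2}/(m+1)` for even `m`, `0` for odd `m`. -/
noncomputable def wgt (m : ℕ) : ℝ := if Even m then (-1)^(m/2) / (m+1) else 0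

lemma wgt_abs_le_one (m : ℕ) : |wgt m| ≤ 1 := by
  unfold wgt
  split
  · rw [abs_div, abs_pow, abs_neg, abs_one, one_pow]
    rw [abs_of_pos (by positivity : (0:ℝ) < (m:ℝ)+1)]
    rw [div_le_one (by positivity)]
    simp
  · simp

lemma wgt_two_mul (k : ℕ) : wgt (2*k) = (-1)^k / (2*k+1) := by
  unfold wgt
  rw [if_pos ⟨k, two_mul k⟩]
  rw [Nat.mul_div_cancel_left k (by norm_num)]
  push_cast; ring_nf

lemma wgt_odd (k : ℕ) : wgt (2*k+1) = 0 := by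
  unfold wgt
  rw [if_neg]
  simp [Nat.even_add_one, parity_simps]

/-- The summand function on `ℕ × ℕ`. -/
noncomputable def gK (c d : ℝ) (p : ℕ × ℕ) : ℝ :=
  (c^p.1 / Nat.factorial p.1) * ((-d)^p.2 / Nat.factorial p.2) * wgt (p.1 + p.2)

lemma abs_gK_le (c d : ℝ) (p : ℕ × ℕ) :
    ‖gK c d p‖ ≤ (|c|^p.1 / Nat.factorial p.1) * (|d|^p.2 / Nat.factorial p.2) := by
  rw [Real.norm_eq_abs]
  unfold gK
  rw [abs_mul, abs_mul]
  calc |c ^ p.1 / ↑p.1.factorial| * |(-d) ^ p.2 / ↑p.2.factorial| * |wgt (p.1 + p.2)|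
      ≤ |c ^ p.1 / ↑p.1.factorial| * |(-d) ^ p.2 / ↑p.2.factorial| * 1 :=
        mul_le_mul_of_nonneg_left (wgt_abs_le_one _) (by positivity)
    _ = |c|^p.1 / ↑p.1.factorial * (|d|^p.2 / ↑p.2.factorial) := by
        rw [mul_one, abs_div, abs_div, abs_pow, abs_pow, abs_neg, Nat.abs_cast, Nat.abs_cast]

lemma summable_B (c d : ℝ) :
    Summable (fun p : ℕ × ℕ => (|c|^p.1 / Nat.factorial p.1) * (|d|^p.2 / Nat.factorial p.2)) :=
  (Real.summable_pow_div_factorial |c|).mul_of_nonneg (Real.summable_pow_div_factorial |d|)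
    (fun n => by positivity) (fun n => by positivity)

lemma summable_gK (c d : ℝ) : Summable (gK c d) :=
  Summable.of_norm_bounded (summable_B c d) (abs_gK_le c d)

lemma add_pow_div_factorial (c e : ℝ) (n : ℕ) :
    ∑ p ∈ antidiagonal n, c^p.1 * e^p.2 / (Nat.factorial p.1 * Nat.factorial p.2)
      = (c+e)^n / Nat.factorial n := by
  rw [Finset.Nat.sum_antidiagonal_eq_sum_range_succ
    (f := fun i j => c^i * e^j / (Nat.factorial i * Nat.factorial j)), add_pow,
    Finset.sum_div]
  apply Finset.sum_congr rfl
  intro k hk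
  have hkn : k ≤ n := Nat.lt_succ_iff.mp (Finset.mem_range.mp hk)
  rw [Nat.cast_choose ℝ hkn]
  have h1 : (Nat.factorial k : ℝ) ≠ 0 := by exact_mod_cast Nat.factorial_ne_zero k
  have h2 : (Nat.factorial (n-k) : ℝ) ≠ 0 := by exact_mod_cast Nat.factorial_ne_zero (n-k)
  have h3 : (Nat.factorial n : ℝ) ≠ 0 := by exact_mod_cast Nat.factorial_ne_zero n
  field_simp

lemma tsum_gK (c d : ℝ) :
    ∑' p : ℕ × ℕ, gK c d p = ∑' m : ℕ, wgt m * ((c - d)^m / Nat.factorial m) := by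
  have hsig : Summable (fun σ : Σ n : ℕ, {x // x ∈ antidiagonal n} =>
      gK c d (Finset.HasAntidiagonal.sigmaAntidiagonalEquivProd σ)) := by
    simpa [Function.comp_def] using
      (Finset.HasAntidiagonal.sigmaAntidiagonalEquivProd.summable_iff.2 (summable_gK c d))
  rw [← Finset.HasAntidiagonal.sigmaAntidiagonalEquivProd.tsum_eq (gK c d), Summable.tsum_sigma hsig]
  apply tsum_congr
  intro n
  have hcoe : ∀ q : {x // x ∈ antidiagonal n},
      gK c d (Finset.HasAntidiagonal.sigmaAntidiagonalEquivProd ⟨n, q⟩) = gK c d (q : ℕ × ℕ) := by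
    intro q; rfl
  rw [tsum_congr hcoe, Finset.tsum_subtype (antidiagonal n) (fun p => gK c d p)]
  have : ∀ p ∈ antidiagonal n, gK c d p
      = wgt n * (c^p.1 * (-d)^p.2 / (Nat.factorial p.1 * Nat.factorial p.2)) := by
    intro p hp
    rw [Finset.HasAntidiagonal.mem_antidiagonal] at hp
    unfold gK
    rw [hp]
    field_simp
  rw [Finset.sum_congr rfl this, ← Finset.mul_sum, add_pow_div_factorial c (-d) n]
  ring_nf

lemma summable_wgt_series (u : ℝ) : Summable (fun m => wgt m * (u^m / Nat.factorial m)) := by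
  apply Summable.of_norm_bounded (g := fun m => |u|^m / Nat.factorial m)
    (Real.summable_pow_div_factorial |u|)
  intro m
  rw [Real.norm_eq_abs, abs_mul]
  calc |wgt m| * |u^m / Nat.factorial m| ≤ 1 * |u^m / Nat.factorial m| :=
        mul_le_mul_of_nonneg_right (wgt_abs_le_one m) (abs_nonneg _)
    _ = |u|^m / Nat.factorial m := by
        rw [one_mul, abs_div, abs_pow, Nat.abs_cast]

lemma tsum_wgt (u : ℝ) (hu : u ≠ 0) :
    ∑' m : ℕ, wgt m * (u^m / Nat.factorial m) = Real.sin u / u := by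
  have hs := summable_wgt_series u
  have hinj2 : Function.Injective (fun k : ℕ => 2*k) := fun a b h => by simp only at h; omega
  have hinj2' : Function.Injective (fun k : ℕ => 2*k+1) := fun a b h => by simp only at h; omega
  have he : Summable (fun k : ℕ => wgt (2*k) * (u^(2*k) / Nat.factorial (2*k))) := by
    simpa [Function.comp_def] using hs.comp_injective hinj2
  have ho : Summable (fun k : ℕ => wgt (2*k+1) * (u^(2*k+1) / Nat.factorial (2*k+1))) := by
    simpa [Function.comp_def] using hs.comp_injective hinj2'
  rw [← tsum_even_add_odd (f := fun m => wgt m * (u^m / Nat.factorial m)) he ho]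
  have h0 : ∀ k : ℕ, wgt (2*k+1) * (u^(2*k+1) / Nat.factorial (2*k+1)) = 0 := by
    intro k; rw [wgt_odd]; ring
  rw [tsum_congr h0, tsum_zero, add_zero]
  have h1 : ∀ k : ℕ, wgt (2*k) * (u^(2*k) / Nat.factorial (2*k))
      = ((-1)^k * u^(2*k+1) / Nat.factorial (2*k+1)) / u := by
    intro k
    rw [wgt_two_mul]
    have hf : (Nat.factorial (2*k+1) : ℝ) = (2*k+1) * Nat.factorial (2*k) := by
      rw [Nat.factorial_succ]; push_cast; ring
    have h2 : (Nat.factorial (2*k) : ℝ) ≠ 0 := by exact_mod_cast Nat.factorial_ne_zero _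
    rw [hf]
    field_simp
    ring
  rw [tsum_congr h1, tsum_div_const, ← Real.sin_eq_tsum]

lemma summable_H (c d : ℝ) : Summable (fun i : ℕ => ∑' j : ℕ, gK c d (i, j)) := by
  apply Summable.of_norm_bounded
    (g := fun i => (|c|^i / Nat.factorial i) * ∑' j : ℕ, (|d|^j / Nat.factorial j))
    ((Real.summable_pow_div_factorial |c|).mul_right _)
  intro i
  have hb : Summable (fun j : ℕ => (|c|^i / Nat.factorial i) * (|d|^j / Nat.factorial j)) :=
    (Real.summable_pow_div_factorial |d|).mul_left _
  have hslice : Summable (fun j : ℕ => ‖gK c d (i, j)‖) :=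
    Summable.of_nonneg_of_le (fun j => norm_nonneg _) (fun j => abs_gK_le c d (i, j)) hb
  have h1 : ‖∑' j : ℕ, gK c d (i, j)‖ ≤ ∑' j : ℕ, ‖gK c d (i, j)‖ :=
    norm_tsum_le_tsum_norm hslice
  have h2 : ∑' j : ℕ, ‖gK c d (i, j)‖
      ≤ ∑' j : ℕ, (|c|^i / Nat.factorial i) * (|d|^j / Nat.factorial j) :=
    Summable.tsum_le_tsum (fun j => abs_gK_le c d (i, j)) hslice hb
  have h3 : ∑' j : ℕ, (|c|^i / Nat.factorial i) * (|d|^j / Nat.factorial j)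
      = (|c|^i / Nat.factorial i) * ∑' j : ℕ, (|d|^j / Nat.factorial j) := tsum_mul_left
  exact h1.trans (h2.trans h3.le)

lemma tsum_gK_split (c d : ℝ) :
    ∑' p : ℕ × ℕ, gK c d p
      = (∑' k : ℕ, ∑' l : ℕ, gK c d (2*k, 2*l)) + ∑' k : ℕ, ∑' l : ℕ, gK c d (2*k+1, 2*l+1) := by
  have h := summable_gK c d
  have hinj2 : Function.Injective (fun k : ℕ => 2*k) := fun a b h => by simp only at h; omega
  have hinj2' : Function.Injective (fun k : ℕ => 2*k+1) := fun a b h => by simp only at h; omega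
  rw [Summable.tsum_prod h]
  set H : ℕ → ℝ := fun i => ∑' j : ℕ, gK c d (i, j) with hH
  have hHs : Summable H := summable_H c d
  have he : Summable (fun k : ℕ => H (2*k)) := by
    simpa [Function.comp_def] using hHs.comp_injective hinj2
  have ho : Summable (fun k : ℕ => H (2*k+1)) := by
    simpa [Function.comp_def] using hHs.comp_injective hinj2'
  rw [← tsum_even_add_odd (f := H) he ho]
  congr 1
  · apply tsum_congr
    intro k
    have hsl : Summable (fun j : ℕ => gK c d (2*k, j)) := h.prod_factor (2*k)
    have hei : Summable (fun l : ℕ => gK c d (2*k, 2*l)) := by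
      simpa [Function.comp_def] using hsl.comp_injective hinj2
    have hoi : Summable (fun l : ℕ => gK c d (2*k, 2*l+1)) := by
      simpa [Function.comp_def] using hsl.comp_injective hinj2'
    have : H (2*k) = (∑' l : ℕ, gK c d (2*k, 2*l)) + ∑' l : ℕ, gK c d (2*k, 2*l+1) := by
      rw [hH]
      exact (tsum_even_add_odd (f := fun j => gK c d (2*k, j)) hei hoi).symm
    rw [this]
    have hz : ∀ l : ℕ, gK c d (2*k, 2*l+1) = 0 := by
      intro l
      unfold gK
      have : (2*k, 2*l+1).1 + (2*k, 2*l+1).2 = 2*(k+l)+1 := by simp; ring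
      rw [this, wgt_odd]
      ring
    rw [tsum_congr hz, tsum_zero, add_zero]
  · apply tsum_congr
    intro k
    have hsl : Summable (fun j : ℕ => gK c d (2*k+1, j)) := h.prod_factor (2*k+1)
    have hei : Summable (fun l : ℕ => gK c d (2*k+1, 2*l)) := by
      simpa [Function.comp_def] using hsl.comp_injective hinj2
    have hoi : Summable (fun l : ℕ => gK c d (2*k+1, 2*l+1)) := by
      simpa [Function.comp_def] using hsl.comp_injective hinj2'
    have : H (2*k+1) = (∑' l : ℕ, gK c d (2*k+1, 2*l)) + ∑' l : ℕ, gK c d (2*k+1, 2*l+1) := by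
      rw [hH]
      exact (tsum_even_add_odd (f := fun j => gK c d (2*k+1, j)) hei hoi).symm
    rw [this]
    have hz : ∀ l : ℕ, gK c d (2*k+1, 2*l) = 0 := by
      intro l
      unfold gK
      have : (2*k+1, 2*l).1 + (2*k+1, 2*l).2 = 2*(k+l)+1 := by simp; ring
      rw [this, wgt_odd]
      ring
    rw [tsum_congr hz, tsum_zero, zero_add]

lemma term_even (x y : ℝ) (k l : ℕ) :
    ((-1)^k * (x^2)^k / ((Nat.factorial k : ℝ) * Real.Gamma ((-(1/2:ℝ) + 1 + k)/1))) *
      ((-1)^l * (y^2)^((1:ℝ)*(l:ℝ)) / ((Nat.factorial l : ℝ) * Real.Gamma (-(1/2:ℝ) + 1 + 1*l))) *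
      ((1:ℝ)/(-(1/2:ℝ) + 1 + k + 1*l))
    = (2/π) * gK (2*x) (2*y) (2*k, 2*l) := by
  have e1 : (-(1/2:ℝ) + 1 + (k:ℝ))/1 = (k:ℝ) + 1/2 := by ring
  have e2 : -(1/2:ℝ) + 1 + 1*(l:ℝ) = (l:ℝ) + 1/2 := by ring
  rw [e1, e2, GammaNatAddHalf, GammaNatAddHalf]
  have erpow : ((y^2) : ℝ)^((1:ℝ)*(l:ℝ)) = (y^2)^l := by
    rw [one_mul, Real.rpow_natCast]
  rw [erpow]
  show _ = (2/π) * (((2*x)^(2*k) / Nat.factorial (2*k)) * ((-(2*y))^(2*l) / Nat.factorial (2*l))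
    * wgt (2*k + 2*l))
  have hm : 2*k + 2*l = 2*(k+l) := by ring
  rw [hm, wgt_two_mul]
  have hneg : (-(2*y))^(2*l) = (2*y)^(2*l) := Even.neg_pow (even_two_mul l) _
  rw [hneg]
  have h4k : (4:ℝ)^k = 2^(2*k) := by rw [pow_mul]; norm_num
  have h4l : (4:ℝ)^l = 2^(2*l) := by rw [pow_mul]; norm_num
  have hfk : (Nat.factorial k : ℝ) ≠ 0 := by exact_mod_cast Nat.factorial_ne_zero _
  have hfl : (Nat.factorial l : ℝ) ≠ 0 := by exact_mod_cast Nat.factorial_ne_zero _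
  have hf2k : (Nat.factorial (2*k) : ℝ) ≠ 0 := by exact_mod_cast Nat.factorial_ne_zero _
  have hf2l : (Nat.factorial (2*l) : ℝ) ≠ 0 := by exact_mod_cast Nat.factorial_ne_zero _
  have hsp : Real.sqrt π ≠ 0 := by positivity
  have hpi : (π:ℝ) ≠ 0 := Real.pi_ne_zero
  have hs2 : Real.sqrt π * Real.sqrt π = π := Real.mul_self_sqrt Real.pi_pos.le
  have hd1 : (-(1/2:ℝ) + 1 + k + 1*l) ≠ 0 := by positivity
  have hd2 : (2*((k:ℝ)+(l:ℝ))+1) ≠ 0 := by positivity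
  rw [h4k, h4l, show (2:ℝ)/π = 2/(√π*√π) from by rw [hs2]]
  field_simp
  ring_nf
  push_cast
  ring

lemma term_odd (x y : ℝ) (k l : ℕ) :
    x * y * (((-1)^k * (x^2)^k / ((Nat.factorial k : ℝ) * Real.Gamma (((1/2:ℝ) + 1 + k)/1))) *
      ((-1)^l * (y^2)^((1:ℝ)*(l:ℝ)) / ((Nat.factorial l : ℝ) * Real.Gamma ((1/2:ℝ) + 1 + 1*l))) *
      ((1:ℝ)/((1/2:ℝ) + 1 + k + 1*l)))
    = (2/π) * gK (2*x) (2*y) (2*k+1, 2*l+1) := by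
  have e1 : ((1/2:ℝ) + 1 + (k:ℝ))/1 = (((k+1 : ℕ)):ℝ) + 1/2 := by push_cast; ring
  have e2 : (1/2:ℝ) + 1 + 1*(l:ℝ) = (((l+1 : ℕ)):ℝ) + 1/2 := by push_cast; ring
  rw [e1, e2, GammaNatAddHalf, GammaNatAddHalf]
  have erpow : ((y^2) : ℝ)^((1:ℝ)*(l:ℝ)) = (y^2)^l := by
    rw [one_mul, Real.rpow_natCast]
  rw [erpow]
  show _ = (2/π) * (((2*x)^(2*k+1) / Nat.factorial (2*k+1)) *
    ((-(2*y))^(2*l+1) / Nat.factorial (2*l+1)) * wgt (2*k+1 + (2*l+1)))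
  have hm : 2*k+1 + (2*l+1) = 2*(k+l+1) := by ring
  rw [hm, wgt_two_mul]
  have hneg : (-(2*y))^(2*l+1) = -((2*y)^(2*l+1)) := Odd.neg_pow ⟨l, by ring⟩ _
  rw [hneg]
  have hfk2 : (Nat.factorial (2*(k+1)) : ℝ) = (2*k+2) * Nat.factorial (2*k+1) := by
    have : 2*(k+1) = (2*k+1) + 1 := by ring
    rw [this, Nat.factorial_succ]; push_cast; ring
  have hfl2 : (Nat.factorial (2*(l+1)) : ℝ) = (2*l+2) * Nat.factorial (2*l+1) := by
    have : 2*(l+1) = (2*l+1) + 1 := by ring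
    rw [this, Nat.factorial_succ]; push_cast; ring
  have hfk1 : (Nat.factorial (k+1) : ℝ) = (k+1) * Nat.factorial k := by
    rw [Nat.factorial_succ]; push_cast; ring
  have hfl1 : (Nat.factorial (l+1) : ℝ) = (l+1) * Nat.factorial l := by
    rw [Nat.factorial_succ]; push_cast; ring
  rw [hfk2, hfl2, hfk1, hfl1]
  have h4k : (4:ℝ)^(k+1) = 2^(2*k+2) := by rw [show 2*k+2 = 2*(k+1) by ring, pow_mul]; norm_num
  have h4l : (4:ℝ)^(l+1) = 2^(2*l+2) := by rw [show 2*l+2 = 2*(l+1) by ring, pow_mul]; norm_num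
  have hfk : (Nat.factorial k : ℝ) ≠ 0 := by exact_mod_cast Nat.factorial_ne_zero _
  have hfl : (Nat.factorial l : ℝ) ≠ 0 := by exact_mod_cast Nat.factorial_ne_zero _
  have hf2k : (Nat.factorial (2*k+1) : ℝ) ≠ 0 := by exact_mod_cast Nat.factorial_ne_zero _
  have hf2l : (Nat.factorial (2*l+1) : ℝ) ≠ 0 := by exact_mod_cast Nat.factorial_ne_zero _
  have hsp : Real.sqrt π ≠ 0 := by positivity
  have hpi : (π:ℝ) ≠ 0 := Real.pi_ne_zero
  have hs2 : Real.sqrt π * Real.sqrt π = π := Real.mul_self_sqrt Real.pi_pos.le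
  have hd1 : ((1/2:ℝ) + 1 + k + 1*l) ≠ 0 := by positivity
  have hd2 : (2*((k:ℝ)+(l:ℝ)+1)+1) ≠ 0 := by positivity
  have hd3 : ((k:ℝ)+1) ≠ 0 := by positivity
  have hd4 : ((l:ℝ)+1) ≠ 0 := by positivity
  have hd5 : (2*(k:ℝ)+2) ≠ 0 := by positivity
  have hd6 : (2*(l:ℝ)+2) ≠ 0 := by positivity
  rw [h4k, h4l, show (2:ℝ)/π = 2/(√π*√π) from by rw [hs2]]
  field_simp
  ring_nf
  push_cast
  ring

lemma sgnPow_one (x : ℝ) : sgnPow x 1 = x := by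
  unfold sgnPow
  rw [Real.rpow_one]
  rcases lt_trichotomy x 0 with h | h | h
  · rw [Real.sign_of_neg h, abs_of_neg h]; ring
  · rw [h, Real.sign_zero, abs_zero]; ring
  · rw [Real.sign_of_pos h, abs_of_pos h]; ring

/-- **The Hermite limit kernel at `α = 0`, `θ = 1` is the sine kernel:**
`𝒦^{Her(0,1)}(x,y) = sin(2(x-y)) / (π(x-y))` for `x ≠ y`. -/
theorem hermiteLimitKernel_eq_sine_kernel (x y : ℝ) (hxy : x ≠ y) :
    hermiteLimitKernel 0 1 x y =
      Real.sin (2 * (x - y)) / (Real.pi * (x - y)) := by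
  rw [hermiteLimitKernel, sgnPow_one, limitKernel, limitKernel]
  rw [show ((0:ℝ)-1)/2 = -(1/2) by norm_num, show ((0:ℝ)+1)/2 = (1/2:ℝ) by norm_num]
  have step1 : (∑' (k : ℕ), ∑' (l : ℕ),
      ((-1)^k * (x^2)^k / ((Nat.factorial k : ℝ) * Real.Gamma ((-(1/2:ℝ) + 1 + k)/1))) *
        ((-1)^l * (y^2)^((1:ℝ)*(l:ℝ)) / ((Nat.factorial l : ℝ) * Real.Gamma (-(1/2:ℝ) + 1 + 1*l))) *
        ((1:ℝ)/(-(1/2:ℝ) + 1 + k + 1*l)))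
      = ∑' (k : ℕ), ∑' (l : ℕ), (2/π) * gK (2*x) (2*y) (2*k, 2*l) :=
    tsum_congr fun k => tsum_congr fun l => term_even x y k l
  have step2 : x * y * (∑' (k : ℕ), ∑' (l : ℕ),
      ((-1)^k * (x^2)^k / ((Nat.factorial k : ℝ) * Real.Gamma (((1/2:ℝ) + 1 + k)/1))) *
        ((-1)^l * (y^2)^((1:ℝ)*(l:ℝ)) / ((Nat.factorial l : ℝ) * Real.Gamma ((1/2:ℝ) + 1 + 1*l))) *
        ((1:ℝ)/((1/2:ℝ) + 1 + k + 1*l)))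
      = ∑' (k : ℕ), ∑' (l : ℕ), (2/π) * gK (2*x) (2*y) (2*k+1, 2*l+1) := by
    rw [← tsum_mul_left]
    refine tsum_congr fun k => ?_
    rw [← tsum_mul_left]
    refine tsum_congr fun l => ?_
    rw [← mul_assoc, ← term_odd x y k l]
    ring
  calc _ = (∑' (k : ℕ), ∑' (l : ℕ), (2/π) * gK (2*x) (2*y) (2*k, 2*l))
        + ∑' (k : ℕ), ∑' (l : ℕ), (2/π) * gK (2*x) (2*y) (2*k+1, 2*l+1) := by
        rw [← step1, ← step2]
    _ = (2/π) * ((∑' (k : ℕ), ∑' (l : ℕ), gK (2*x) (2*y) (2*k, 2*l))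
        + ∑' (k : ℕ), ∑' (l : ℕ), gK (2*x) (2*y) (2*k+1, 2*l+1)) := by
        simp_rw [tsum_mul_left]; ring
    _ = (2/π) * ∑' p : ℕ × ℕ, gK (2*x) (2*y) p := by rw [← tsum_gK_split]
    _ = (2/π) * ∑' m : ℕ, wgt m * ((2*x - 2*y)^m / Nat.factorial m) := by rw [tsum_gK]
    _ = (2/π) * (Real.sin (2*x - 2*y) / (2*x - 2*y)) := by
        rw [tsum_wgt (2*x - 2*y) (by
          intro h
          apply hxy
          linarith)]
    _ = Real.sin (2*(x-y)) / (π * (x-y)) := by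
        rw [show 2*x - 2*y = 2*(x-y) by ring]
        have hxy' : x - y ≠ 0 := sub_ne_zero.mpr hxy
        have hpi : (π:ℝ) ≠ 0 := Real.pi_ne_zero
        field_simp
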